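/- For every constant c > 0, there exists a graph G on n vertices (namely a complete bipartite graph K_{t,t} with t sufficiently large, which has pathwidth exactly t and n = 2t vertices) such that for every λ ≥ 1, the mixing time of the Glauber dynamics on the independent sets of G with fugacity λ satisfies τ_{G,λ} ≥ ((λ+1)/2)^{pw(G)} · n^c. -/

import Mathlib

open Finset

section HardCoreDefs

variable {V : Type*} [Fintype V] [DecidableEq V]

/-- `I` is an independent set of the simple graph `G`. -/
def IsIndep (G : SimpleGraph V) (I : Finset V) : Prop :=
  ∀ u ∈ I, ∀ v ∈ I, ¬ G.Adj u v

open Classical in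
/-- The set `𝓘(G)` of independent sets of `G`. -/
noncomputable def indepSets (G : SimpleGraph V) : Finset (Finset V) :=
  Finset.univ.filter fun I => IsIndep G I

/-- The hard-core partition function `Z_G(λ)`. -/
noncomputable def Z (G : SimpleGraph V) (lam : ℝ) : ℝ :=
  ∑ I ∈ indepSets G, lam ^ I.card

/-- The hard-core distribution `π_{G,λ}`. -/
noncomputable def hardCore (G : SimpleGraph V) (lam : ℝ) (I : Finset V) : ℝ :=
  lam ^ I.card / Z G lam

open Classical in
/-- The transition probabilities of the Glauber dynamics on independent sets of `G`
with fugacity `λ`. -/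
noncomputable def glauberP (G : SimpleGraph V) (lam : ℝ) (I J : Finset V) : ℝ :=
  (1 / (Fintype.card V : ℝ)) * ∑ v : V,
    if v ∈ I then
      (if J = I.erase v then 1 / (lam + 1) else if J = I then lam / (lam + 1) else 0)
    else if IsIndep G (insert v I) then
      (if J = insert v I then lam / (lam + 1) else if J = I then 1 / (lam + 1) else 0)
    else (if J = I then 1 else 0)

/-- One step of the Glauber dynamics, applied to a distribution on independent sets. -/
noncomputable def stepDist (G : SimpleGraph V) (lam : ℝ) (μ : Finset V → ℝ) :
    Finset V → ℝ :=
  fun J => ∑ I ∈ indepSets G, μ I * glauberP G lam I J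

/-- The distribution of the Glauber dynamics after `t` steps started from `I`. -/
noncomputable def distAfter (G : SimpleGraph V) (lam : ℝ) (I : Finset V) (t : ℕ) :
    Finset V → ℝ :=
  (stepDist G lam)^[t] (fun J => if J = I then 1 else 0)

/-- Total variation distance between two distributions on independent sets. -/
noncomputable def tvDist (G : SimpleGraph V) (μ ν : Finset V → ℝ) : ℝ :=
  (1 / 2) * ∑ I ∈ indepSets G, |μ I - ν I|

/-- The mixing time `τ_{G,λ}` of the Glauber dynamics. -/
noncomputable def mixingTime (G : SimpleGraph V) (lam : ℝ) : ℕ :=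
  sInf {t : ℕ | ∀ I ∈ indepSets G,
    tvDist G (distAfter G lam I t) (hardCore G lam) ≤ 1 / 4}

/-- `λ̃ = e^{|ln λ|} = max (λ, 1/λ)`. -/
noncomputable def lamTilde (lam : ℝ) : ℝ := max lam lam⁻¹

/-- The independence number of the subgraph of `G` induced by `S`. -/
noncomputable def alphaOn (G : SimpleGraph V) (S : Finset V) : ℕ :=
  ((indepSets G).filter fun I => I ⊆ S).sup Finset.card

/-- The number of independent sets of the subgraph of `G` induced by `S`. -/
noncomputable def numIndepOn (G : SimpleGraph V) (S : Finset V) : ℕ :=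
  ((indepSets G).filter fun I => I ⊆ S).card

/-- The subgraph of `G` induced by a finite vertex set `S`. -/
def inducedF (G : SimpleGraph V) (S : Finset V) : SimpleGraph {x : V // x ∈ S} :=
  SimpleGraph.comap Subtype.val G

end HardCoreDefs
section Decomp

variable {V : Type*} [Fintype V] [DecidableEq V]

/-- `X : Fin p → Finset V` is a path decomposition of `G`. -/
def IsPathDecomp (G : SimpleGraph V) (p : ℕ) (X : Fin p → Finset V) : Prop :=
  (∀ v : V, ∃ i, v ∈ X i) ∧
  (∀ u v : V, G.Adj u v → ∃ i, u ∈ X i ∧ v ∈ X i) ∧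
  (∀ v : V, ∀ i j k : Fin p, i ≤ j → j ≤ k → v ∈ X i → v ∈ X k → v ∈ X j)

/-- The pathwidth of `G` : the least `w` such that `G` has a path decomposition
with all bags of size at most `w + 1`. -/
noncomputable def pathwidth (G : SimpleGraph V) : ℕ :=
  sInf {w : ℕ | ∃ (p : ℕ) (X : Fin p → Finset V),
    IsPathDecomp G p X ∧ ∀ i, (X i).card ≤ w + 1}

/-- `(T, X)` is a tree decomposition of `G`. -/
def IsTreeDecomp {ι : Type*} (G : SimpleGraph V) (T : SimpleGraph ι) (X : ι → Finset V) : Prop :=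
  T.IsTree ∧
  (∀ v : V, ∃ t, v ∈ X t) ∧
  (∀ u v : V, G.Adj u v → ∃ t, u ∈ X t ∧ v ∈ X t) ∧
  (∀ v : V, (T.induce {t | v ∈ X t}).Connected)

/-- The treewidth of `G`. -/
noncomputable def treewidth (G : SimpleGraph V) : ℕ :=
  sInf {w : ℕ | ∃ (m : ℕ) (T : SimpleGraph (Fin m)) (X : Fin m → Finset V),
    IsTreeDecomp G T X ∧ ∀ t, (X t).card ≤ w + 1}

end Decomp

set_option linter.unusedSectionVars false

section GenericLemmas

open Classical

variable {V : Type*} [Fintype V] [DecidableEq V] {G : SimpleGraph V} {lam : ℝ}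

lemma mem_indepSets_iff {I : Finset V} : I ∈ indepSets G ↔ IsIndep G I := by
  classical
  simp [indepSets]

lemma empty_mem_indepSets : (∅ : Finset V) ∈ indepSets G := by
  rw [mem_indepSets_iff]; intro u hu; simp at hu

lemma IsIndep.subset' {I J : Finset V} (h : IsIndep G I) (hJI : J ⊆ I) : IsIndep G J :=
  fun u hu v hv => h u (hJI hu) v (hJI hv)

lemma sum_two_point {α : Type*} [DecidableEq α] (s : Finset α) {a b : α} (ha : a ∈ s)
    (hb : b ∈ s) (hab : a ≠ b) (x y : ℝ) :
    ∑ J ∈ s, (if J = a then x else if J = b then y else 0) = x + y := by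
  have : ∀ J ∈ s, (if J = a then x else if J = b then y else 0)
      = (if J = a then x else 0) + (if J = b then y else 0) := by
    intro J _
    by_cases h1 : J = a
    · subst h1; rw [if_pos rfl, if_pos rfl, if_neg hab, add_zero]
    · by_cases h2 : J = b
      · subst h2; simp [h1]
      · simp [h1, h2]
  rw [Finset.sum_congr rfl this, Finset.sum_add_distrib,
    Finset.sum_ite_eq' s a (fun _ => x), Finset.sum_ite_eq' s b (fun _ => y),
    if_pos ha, if_pos hb]

lemma sum_one_point {α : Type*} [DecidableEq α] (s : Finset α) {a : α} (ha : a ∈ s) (x : ℝ) :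
    ∑ J ∈ s, (if J = a then x else 0) = x := by
  rw [Finset.sum_ite_eq' s a (fun _ => x), if_pos ha]

lemma glauberP_term_nonneg (hlam : 0 ≤ lam) (I J : Finset V) (v : V) :
    0 ≤ (if v ∈ I then
      (if J = I.erase v then 1 / (lam + 1) else if J = I then lam / (lam + 1) else 0)
    else if IsIndep G (insert v I) then
      (if J = insert v I then lam / (lam + 1) else if J = I then 1 / (lam + 1) else 0)
    else (if J = I then 1 else 0)) := by
  have h1 : (0:ℝ) < lam + 1 := by linarith
  split_ifs <;> positivity

lemma glauberP_nonneg (hlam : 0 ≤ lam) (I J : Finset V) : 0 ≤ glauberP G lam I J := by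
  unfold glauberP
  apply mul_nonneg (by positivity)
  exact Finset.sum_nonneg fun v _ => glauberP_term_nonneg hlam I J v

lemma glauberP_target_indep {I J : Finset V} (hI : IsIndep G I) (hJ : ¬ IsIndep G J) :
    glauberP G lam I J = 0 := by
  unfold glauberP
  rw [Finset.sum_eq_zero, mul_zero]
  intro v _
  have he : IsIndep G (I.erase v) := hI.subset' (Finset.erase_subset _ _)
  by_cases hv : v ∈ I
  · rw [if_pos hv]
    split_ifs with h1 h2
    · exact absurd (h1 ▸ he) hJ
    · exact absurd (h2 ▸ hI) hJ
    · rfl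
  · rw [if_neg hv]
    by_cases hins : IsIndep G (insert v I)
    · rw [if_pos hins]
      split_ifs with h1 h2
      · exact absurd (h1 ▸ hins) hJ
      · exact absurd (h2 ▸ hI) hJ
      · rfl
    · rw [if_neg hins]
      split_ifs with h1
      · exact absurd (h1 ▸ hI) hJ
      · rfl

lemma sum_glauberP [Nonempty V] (hlam : 0 ≤ lam) {I : Finset V} (hI : IsIndep G I) :
    ∑ J ∈ indepSets G, glauberP G lam I J = 1 := by
  have hl1 : lam + 1 ≠ 0 := by linarith
  have hIs : I ∈ indepSets G := mem_indepSets_iff.mpr hI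
  unfold glauberP
  rw [← Finset.mul_sum, Finset.sum_comm]
  have key : ∀ v : V, ∑ J ∈ indepSets G,
      (if v ∈ I then
        (if J = I.erase v then 1 / (lam + 1) else if J = I then lam / (lam + 1) else 0)
      else if IsIndep G (insert v I) then
        (if J = insert v I then lam / (lam + 1) else if J = I then 1 / (lam + 1) else 0)
      else (if J = I then 1 else 0)) = 1 := by
    intro v
    by_cases hv : v ∈ I
    · simp only [if_pos hv]
      rw [sum_two_point (indepSets G)
        (mem_indepSets_iff.mpr (hI.subset' (Finset.erase_subset _ _))) hIs
        (Finset.erase_ne_self.mpr hv), ← add_div, add_comm, div_self hl1]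
    · simp only [if_neg hv]
      by_cases hins : IsIndep G (insert v I)
      · simp only [if_pos hins]
        rw [sum_two_point (indepSets G) (mem_indepSets_iff.mpr hins) hIs
          (by intro h; exact hv (h ▸ Finset.mem_insert_self v I)),
          ← add_div, div_self hl1]
      · simp only [if_neg hins]
        rw [sum_one_point (indepSets G) hIs]
  rw [Finset.sum_congr rfl (fun v _ => key v), Finset.sum_const, Finset.card_univ,
    nsmul_eq_mul, mul_one]
  have hc : (0:ℝ) < (Fintype.card V : ℝ) := by
    exact_mod_cast Fintype.card_pos
  field_simp

lemma glauberP_balance (hlam : 0 < lam) {I J : Finset V} (hI : IsIndep G I) (hJ : IsIndep G J) :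
    lam ^ I.card * glauberP G lam I J = lam ^ J.card * glauberP G lam J I := by
  unfold glauberP
  have hmul : ∀ (c : ℝ) (f : V → ℝ), c * ((1/(Fintype.card V:ℝ)) * ∑ v, f v)
      = (1/(Fintype.card V:ℝ)) * ∑ v, c * f v := by
    intro c f
    rw [← Finset.mul_sum]
    ring
  rw [hmul, hmul]
  congr 1
  apply Finset.sum_congr rfl
  intro v _
  by_cases hvI : v ∈ I <;> by_cases hvJ : v ∈ J
  · -- v ∈ I, v ∈ J
    rw [if_pos hvI, if_pos hvJ]
    have e1 : J ≠ I.erase v := fun h => Finset.notMem_erase v I (h ▸ hvJ)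
    have e2 : I ≠ J.erase v := fun h => Finset.notMem_erase v J (h ▸ hvI)
    rw [if_neg e1, if_neg e2]
    by_cases hIJ : J = I
    · subst hIJ; rfl
    · have hJI' : I ≠ J := fun h => hIJ h.symm
      rw [if_neg hIJ, if_neg hJI', mul_zero, mul_zero]
  · -- v ∈ I, v ∉ J
    rw [if_pos hvI, if_neg hvJ]
    have hJI : J ≠ I := fun h => hvJ (h ▸ hvI)
    by_cases h1 : J = I.erase v
    · have hIiJ : I = insert v J := by
        subst h1; rw [Finset.insert_erase hvI]
      rw [if_pos h1, if_pos (hIiJ ▸ hI), if_pos hIiJ]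
      have hcard : I.card = J.card + 1 := by
        subst h1
        rw [Finset.card_erase_of_mem hvI]
        have : 1 ≤ I.card := Finset.card_pos.mpr ⟨v, hvI⟩
        omega
      rw [hcard, pow_succ, one_div]
      ring
    · rw [if_neg h1, if_neg hJI]
      have h2 : I ≠ insert v J := by
        intro h; apply h1
        rw [h, Finset.erase_insert hvJ]
      have hIJ' : I ≠ J := fun h => hvJ (h ▸ hvI)
      by_cases hins : IsIndep G (insert v J)
      · rw [if_pos hins, if_neg h2, if_neg hIJ', mul_zero, mul_zero]
      · rw [if_neg hins, if_neg hIJ', mul_zero, mul_zero]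
  · -- v ∉ I, v ∈ J  (symmetric)
    rw [if_neg hvI, if_pos hvJ]
    have hIJ' : I ≠ J := fun h => hvI (h ▸ hvJ)
    by_cases h1 : I = J.erase v
    · have hJiI : J = insert v I := by
        subst h1; rw [Finset.insert_erase hvJ]
      rw [if_pos (hJiI ▸ hJ), if_pos hJiI, if_pos h1]
      have hcard : J.card = I.card + 1 := by
        subst h1
        rw [Finset.card_erase_of_mem hvJ]
        have : 1 ≤ J.card := Finset.card_pos.mpr ⟨v, hvJ⟩
        omega
      rw [hcard, pow_succ, one_div]
      ring
    · rw [if_neg h1, if_neg hIJ']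
      have h2 : J ≠ insert v I := by
        intro h; apply h1
        rw [h, Finset.erase_insert hvI]
      have hJI : J ≠ I := fun h => hvI (h ▸ hvJ)
      by_cases hins : IsIndep G (insert v I)
      · rw [if_pos hins, if_neg h2, if_neg hJI, mul_zero, mul_zero]
      · rw [if_neg hins, if_neg hJI, mul_zero, mul_zero]
  · -- v ∉ I, v ∉ J
    rw [if_neg hvI, if_neg hvJ]
    by_cases hIJ : J = I
    · subst hIJ; rfl
    · have h2 : J ≠ insert v I := fun h => hvJ (h ▸ Finset.mem_insert_self v I)
      have h3 : I ≠ insert v J := fun h => hvI (h ▸ Finset.mem_insert_self v J)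
      have hJI : I ≠ J := fun h => hIJ h.symm
      by_cases hins1 : IsIndep G (insert v I) <;> by_cases hins2 : IsIndep G (insert v J) <;>
        simp [hins1, hins2, h2, h3, hIJ, hJI]

/-- A distribution supported on independent sets. -/
def IsSupp (G : SimpleGraph V) (μ : Finset V → ℝ) : Prop :=
  ∀ J : Finset V, ¬ IsIndep G J → μ J = 0

lemma isSupp_delta {I : Finset V} (hI : IsIndep G I) :
    IsSupp G (fun J => if J = I then (1:ℝ) else 0) := by
  intro J hJ
  simp only []
  rw [if_neg]
  intro h; exact hJ (h ▸ hI)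

lemma isSupp_stepDist (μ : Finset V → ℝ) : IsSupp G (stepDist G lam μ) := by
  intro J hJ
  unfold stepDist
  apply Finset.sum_eq_zero
  intro I hIs
  rw [glauberP_target_indep (mem_indepSets_iff.mp hIs) hJ, mul_zero]

lemma isSupp_distAfter {I : Finset V} (hI : IsIndep G I) (s : ℕ) :
    IsSupp G (distAfter G lam I s) := by
  cases s with
  | zero => exact isSupp_delta hI
  | succ n =>
    unfold distAfter
    rw [Function.iterate_succ_apply']
    exact isSupp_stepDist _

lemma distAfter_succ (I : Finset V) (s : ℕ) :
    distAfter G lam I (s + 1) = stepDist G lam (distAfter G lam I s) := by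
  unfold distAfter
  rw [Function.iterate_succ_apply']

lemma stepDist_nonneg (hlam : 0 ≤ lam) {μ : Finset V → ℝ} (hμ : ∀ J, 0 ≤ μ J) (J : Finset V) :
    0 ≤ stepDist G lam μ J :=
  Finset.sum_nonneg fun I _ => mul_nonneg (hμ I) (glauberP_nonneg hlam I J)

lemma distAfter_nonneg (hlam : 0 ≤ lam) (I : Finset V) (s : ℕ) (J : Finset V) :
    0 ≤ distAfter G lam I s J := by
  induction s generalizing J with
  | zero => unfold distAfter; simp only [Function.iterate_zero, id]; positivity
  | succ n ih =>
    rw [distAfter_succ]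
    exact stepDist_nonneg hlam (fun K => ih K) J

lemma sum_stepDist [Nonempty V] (hlam : 0 ≤ lam) (μ : Finset V → ℝ) :
    ∑ J ∈ indepSets G, stepDist G lam μ J = ∑ I ∈ indepSets G, μ I := by
  unfold stepDist
  rw [Finset.sum_comm]
  apply Finset.sum_congr rfl
  intro I hIs
  rw [← Finset.mul_sum, sum_glauberP hlam (mem_indepSets_iff.mp hIs), mul_one]

lemma sum_distAfter [Nonempty V] (hlam : 0 ≤ lam) {I : Finset V} (hI : IsIndep G I) (s : ℕ) :
    ∑ J ∈ indepSets G, distAfter G lam I s J = 1 := by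
  induction s with
  | zero =>
    unfold distAfter
    simp only [Function.iterate_zero, id]
    rw [sum_one_point (indepSets G) (mem_indepSets_iff.mpr hI)]
  | succ n ih =>
    rw [distAfter_succ, sum_stepDist hlam, ih]

lemma distAfter_one {I : Finset V} (hI : IsIndep G I) (J : Finset V) :
    distAfter G lam I 1 J = glauberP G lam I J := by
  unfold distAfter
  rw [Function.iterate_one]
  unfold stepDist
  simp only [ite_mul, one_mul, zero_mul]
  rw [Finset.sum_ite_eq' (indepSets G) I (fun x => glauberP G lam x J),
    if_pos (mem_indepSets_iff.mpr hI)]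

lemma iterate_stepDist_eq (b : ℕ) (μ : Finset V → ℝ) (hμ : IsSupp G μ) (J : Finset V) :
    (stepDist G lam)^[b] μ J = ∑ I ∈ indepSets G, μ I * distAfter G lam I b J := by
  induction b generalizing μ hμ J with
  | zero =>
    simp only [Function.iterate_zero, id]
    unfold distAfter
    simp only [Function.iterate_zero, id]
    have : ∀ I ∈ indepSets G, μ I * (if J = I then (1:ℝ) else 0)
        = if J = I then μ I else 0 := by
      intro I _
      by_cases h : J = I <;> simp [h]
    rw [Finset.sum_congr rfl this, Finset.sum_ite_eq (indepSets G) J (fun I => μ I)]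
    by_cases hJ : J ∈ indepSets G
    · rw [if_pos hJ]
    · rw [if_neg hJ, hμ J (fun h => hJ (mem_indepSets_iff.mpr h))]
  | succ n ih =>
    rw [Function.iterate_succ_apply, ih (stepDist G lam μ) (isSupp_stepDist μ) J]
    have expand : ∀ K ∈ indepSets G, stepDist G lam μ K * distAfter G lam K n J
        = ∑ I ∈ indepSets G, μ I * (glauberP G lam I K * distAfter G lam K n J) := by
      intro K _
      unfold stepDist
      rw [Finset.sum_mul]
      apply Finset.sum_congr rfl
      intro I _
      ring
    rw [Finset.sum_congr rfl expand, Finset.sum_comm]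
    apply Finset.sum_congr rfl
    intro I hIs
    rw [← Finset.mul_sum]
    congr 1
    have hInd : IsIndep G I := mem_indepSets_iff.mp hIs
    have : distAfter G lam I (n+1) J
        = (stepDist G lam)^[n] (stepDist G lam (fun K => if K = I then (1:ℝ) else 0)) J := by
      unfold distAfter
      rw [Function.iterate_succ_apply]
    rw [this, ih _ (isSupp_stepDist _) J]
    apply Finset.sum_congr rfl
    intro K _
    congr 1
    unfold stepDist
    simp only [ite_mul, one_mul, zero_mul]
    rw [Finset.sum_ite_eq' (indepSets G) I (fun x => glauberP G lam x K), if_pos hIs]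

lemma chapman {I : Finset V} (hI : IsIndep G I) (a b : ℕ) (J : Finset V) :
    distAfter G lam I (a + b) J
      = ∑ K ∈ indepSets G, distAfter G lam I a K * distAfter G lam K b J := by
  have : distAfter G lam I (a + b) = (stepDist G lam)^[b] (distAfter G lam I a) := by
    unfold distAfter
    rw [add_comm, Function.iterate_add_apply]
  rw [this, iterate_stepDist_eq b _ (isSupp_distAfter hI a) J]

lemma Z_pos (hlam : 0 < lam) : 0 < Z G lam := by
  unfold Z
  apply Finset.sum_pos
  · intro I _; positivity
  · exact ⟨∅, empty_mem_indepSets⟩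

/-- The stationary distribution, as a function supported on independent sets. -/
noncomputable def piR (G : SimpleGraph V) (lam : ℝ) : Finset V → ℝ :=
  fun J => if IsIndep G J then lam ^ J.card / Z G lam else 0

lemma piR_nonneg (hlam : 0 < lam) (J : Finset V) : 0 ≤ piR G lam J := by
  unfold piR
  have := Z_pos (G := G) hlam
  split_ifs <;> positivity

lemma piR_le_one (hlam : 0 < lam) (J : Finset V) : piR G lam J ≤ 1 := by
  unfold piR
  split_ifs with h
  · rw [div_le_one (Z_pos hlam)]
    unfold Z
    apply Finset.single_le_sum (f := fun I : Finset V => lam ^ I.card)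
      (fun i _ => by positivity) (mem_indepSets_iff.mpr h)
  · norm_num

lemma sum_piR (hlam : 0 < lam) : ∑ J ∈ indepSets G, piR G lam J = 1 := by
  unfold piR
  rw [Finset.sum_congr rfl (fun J hJ => if_pos (mem_indepSets_iff.mp hJ)),
    ← Finset.sum_div]
  exact div_self (ne_of_gt (Z_pos hlam))

lemma isSupp_piR : IsSupp G (piR G lam) := by
  intro J hJ
  unfold piR
  rw [if_neg hJ]

lemma stepDist_piR [Nonempty V] (hlam : 0 < lam) :
    stepDist G lam (piR G lam) = piR G lam := by
  funext J
  by_cases hJ : IsIndep G J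
  · unfold stepDist
    have : ∀ I ∈ indepSets G, piR G lam I * glauberP G lam I J
        = (lam ^ J.card * glauberP G lam J I) / Z G lam := by
      intro I hIs
      have hInd := mem_indepSets_iff.mp hIs
      unfold piR
      rw [if_pos hInd, div_mul_eq_mul_div, glauberP_balance hlam hInd hJ]
    rw [Finset.sum_congr rfl this, ← Finset.sum_div, ← Finset.mul_sum,
      sum_glauberP hlam.le hJ, mul_one]
    unfold piR
    rw [if_pos hJ]
  · rw [isSupp_stepDist _ J hJ, isSupp_piR J hJ]

lemma iterate_stepDist_piR [Nonempty V] (hlam : 0 < lam) (s : ℕ) :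
    (stepDist G lam)^[s] (piR G lam) = piR G lam := by
  induction s with
  | zero => rfl
  | succ n ih => rw [Function.iterate_succ_apply, stepDist_piR hlam, ih]

lemma glauberP_self_pos [Nonempty V] (hlam : 0 < lam) {I : Finset V} (hI : IsIndep G I) :
    0 < glauberP G lam I I := by
  have hl1 : (0:ℝ) < lam + 1 := by linarith
  unfold glauberP
  apply mul_pos (by positivity)
  apply Finset.sum_pos
  · intro v _
    by_cases hv : v ∈ I
    · have e1 : I ≠ I.erase v := fun h => Finset.notMem_erase v I (h ▸ hv)
      rw [if_pos hv, if_neg e1, if_pos rfl]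
      positivity
    · rw [if_neg hv]
      by_cases hins : IsIndep G (insert v I)
      · have e2 : I ≠ insert v I := fun h => hv (h ▸ Finset.mem_insert_self v I)
        rw [if_pos hins, if_neg e2, if_pos rfl]
        positivity
      · rw [if_neg hins, if_pos rfl]
        norm_num
  · exact Finset.univ_nonempty

lemma glauberP_erase_pos [Nonempty V] (hlam : 0 < lam) {I : Finset V} {v : V} (hv : v ∈ I) :
    0 < glauberP G lam I (I.erase v) := by
  have hl1 : (0:ℝ) < lam + 1 := by linarith
  unfold glauberP
  apply mul_pos (by positivity)
  have hterm : (0:ℝ) < (if v ∈ I then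
      (if I.erase v = I.erase v then 1 / (lam + 1) else if I.erase v = I then lam / (lam + 1) else 0)
    else if IsIndep G (insert v I) then
      (if I.erase v = insert v I then lam / (lam + 1) else if I.erase v = I then 1 / (lam + 1) else 0)
    else (if I.erase v = I then 1 else 0)) := by
    rw [if_pos hv, if_pos rfl]
    positivity
  calc (0:ℝ) < _ := hterm
  _ ≤ _ := Finset.single_le_sum (f := fun v' : V => (if v' ∈ I then
      (if I.erase v = I.erase v' then 1 / (lam + 1) else if I.erase v = I then lam / (lam + 1) else 0)
    else if IsIndep G (insert v' I) then
      (if I.erase v = insert v' I then lam / (lam + 1) else if I.erase v = I then 1 / (lam + 1) else 0)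
    else (if I.erase v = I then 1 else 0)))
      (fun v' _ => glauberP_term_nonneg hlam.le I (I.erase v) v') (Finset.mem_univ v)

lemma glauberP_insert_pos [Nonempty V] (hlam : 0 < lam) {I : Finset V} {v : V} (hv : v ∉ I)
    (hins : IsIndep G (insert v I)) :
    0 < glauberP G lam I (insert v I) := by
  have hl1 : (0:ℝ) < lam + 1 := by linarith
  unfold glauberP
  apply mul_pos (by positivity)
  have hterm : (0:ℝ) < (if v ∈ I then
      (if insert v I = I.erase v then 1 / (lam + 1) else if insert v I = I then lam / (lam + 1) else 0)
    else if IsIndep G (insert v I) then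
      (if insert v I = insert v I then lam / (lam + 1) else if insert v I = I then 1 / (lam + 1) else 0)
    else (if insert v I = I then 1 else 0)) := by
    rw [if_neg hv, if_pos hins, if_pos rfl]
    positivity
  calc (0:ℝ) < _ := hterm
  _ ≤ _ := Finset.single_le_sum (f := fun v' : V => (if v' ∈ I then
      (if insert v I = I.erase v' then 1 / (lam + 1) else if insert v I = I then lam / (lam + 1) else 0)
    else if IsIndep G (insert v' I) then
      (if insert v I = insert v' I then lam / (lam + 1) else if insert v I = I then 1 / (lam + 1) else 0)
    else (if insert v I = I then 1 else 0)))
      (fun v' _ => glauberP_term_nonneg hlam.le I (insert v I) v') (Finset.mem_univ v)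

lemma distAfter_pad [Nonempty V] (hlam : 0 < lam) {I J : Finset V} (hI : IsIndep G I)
    (hJ : IsIndep G J) {s : ℕ} (h : 0 < distAfter G lam I s J) :
    0 < distAfter G lam I (s + 1) J := by
  rw [chapman hI s 1 J]
  have hterm : 0 < distAfter G lam I s J * distAfter G lam J 1 J := by
    apply mul_pos h
    rw [distAfter_one hJ]
    exact glauberP_self_pos hlam hJ
  calc (0:ℝ) < _ := hterm
  _ ≤ _ := Finset.single_le_sum
      (f := fun K => distAfter G lam I s K * distAfter G lam K 1 J)
      (fun K _ => mul_nonneg (distAfter_nonneg hlam.le I s K) (distAfter_nonneg hlam.le K 1 J))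
      (mem_indepSets_iff.mpr hJ)

lemma distAfter_to_empty_pos [Nonempty V] (hlam : 0 < lam) {I : Finset V} (hI : IsIndep G I) :
    0 < distAfter G lam I I.card ∅ := by
  generalize hn : I.card = n
  induction n generalizing I with
  | zero =>
    rw [Finset.card_eq_zero] at hn
    subst hn
    unfold distAfter
    simp
  | succ n ih =>
    have hne : I.Nonempty := by
      rw [← Finset.card_pos, hn]; omega
    obtain ⟨v, hv⟩ := hne
    have hIe : IsIndep G (I.erase v) := hI.subset' (Finset.erase_subset _ _)
    have hcard : (I.erase v).card = n := by
      rw [Finset.card_erase_of_mem hv, hn]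
      omega
    have h1 : 0 < distAfter G lam I 1 (I.erase v) := by
      rw [distAfter_one hI]
      exact glauberP_erase_pos hlam hv
    have h2 : 0 < distAfter G lam (I.erase v) n ∅ := ih hIe hcard
    have : (0:ℝ) < distAfter G lam I 1 (I.erase v) * distAfter G lam (I.erase v) n ∅ :=
      mul_pos h1 h2
    calc (0:ℝ) < _ := this
    _ ≤ ∑ K ∈ indepSets G, distAfter G lam I 1 K * distAfter G lam K n ∅ :=
        Finset.single_le_sum
          (f := fun K => distAfter G lam I 1 K * distAfter G lam K n ∅)
          (fun K _ => mul_nonneg (distAfter_nonneg hlam.le I 1 K) (distAfter_nonneg hlam.le K n ∅))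
          (mem_indepSets_iff.mpr hIe)
    _ = distAfter G lam I (n + 1) ∅ := by
        rw [← chapman hI 1 n ∅]
        norm_num [add_comm]

lemma distAfter_from_empty_pos [Nonempty V] (hlam : 0 < lam) {J : Finset V} (hJ : IsIndep G J) :
    0 < distAfter G lam ∅ J.card J := by
  generalize hn : J.card = n
  induction n generalizing J with
  | zero =>
    rw [Finset.card_eq_zero] at hn
    subst hn
    unfold distAfter
    simp
  | succ n ih =>
    have hne : J.Nonempty := by
      rw [← Finset.card_pos, hn]; omega
    obtain ⟨v, hv⟩ := hne
    have hJe : IsIndep G (J.erase v) := hJ.subset' (Finset.erase_subset _ _)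
    have hcard : (J.erase v).card = n := by
      rw [Finset.card_erase_of_mem hv, hn]
      omega
    have h2 : 0 < distAfter G lam (J.erase v) 1 J := by
      rw [distAfter_one hJe]
      have : J = insert v (J.erase v) := (Finset.insert_erase hv).symm
      nth_rewrite 2 [this]
      exact glauberP_insert_pos hlam (Finset.notMem_erase v J) (this ▸ hJ)
    have h1 : 0 < distAfter G lam ∅ n (J.erase v) := ih hJe hcard
    have : (0:ℝ) < distAfter G lam ∅ n (J.erase v) * distAfter G lam (J.erase v) 1 J :=
      mul_pos h1 h2
    calc (0:ℝ) < _ := this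
    _ ≤ ∑ K ∈ indepSets G, distAfter G lam ∅ n K * distAfter G lam K 1 J :=
        Finset.single_le_sum
          (f := fun K => distAfter G lam ∅ n K * distAfter G lam K 1 J)
          (fun K _ => mul_nonneg (distAfter_nonneg hlam.le ∅ n K) (distAfter_nonneg hlam.le K 1 J))
          (mem_indepSets_iff.mpr hJe)
    _ = distAfter G lam ∅ (n + 1) J := by
        rw [← chapman (G := G) (I := (∅ : Finset V)) (by intro u hu; simp at hu) n 1 J]

lemma distAfter_pos_of_le [Nonempty V] (hlam : 0 < lam) {I J : Finset V} (hI : IsIndep G I)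
    (hJ : IsIndep G J) {s : ℕ} (hs : I.card + J.card ≤ s) :
    0 < distAfter G lam I s J := by
  have base : 0 < distAfter G lam I (I.card + J.card) J := by
    rw [chapman hI I.card J.card J]
    have hterm : (0:ℝ) < distAfter G lam I I.card ∅ * distAfter G lam ∅ J.card J :=
      mul_pos (distAfter_to_empty_pos hlam hI) (distAfter_from_empty_pos hlam hJ)
    calc (0:ℝ) < _ := hterm
    _ ≤ _ := Finset.single_le_sum
        (f := fun K => distAfter G lam I I.card K * distAfter G lam K J.card J)
        (fun K _ => mul_nonneg (distAfter_nonneg hlam.le I _ K) (distAfter_nonneg hlam.le K _ J))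
        empty_mem_indepSets
  obtain ⟨k, hk⟩ := Nat.exists_eq_add_of_le hs
  subst hk
  clear hs
  induction k with
  | zero => exact base
  | succ n ih => exact distAfter_pad hlam hI hJ ih

lemma contraction [Nonempty V] (hlam : 0 < lam) {s : ℕ} {δ : ℝ} (hδ0 : 0 ≤ δ)
    (hmin : ∀ I ∈ indepSets G, ∀ J ∈ indepSets G, δ * piR G lam J ≤ distAfter G lam I s J)
    {μ : Finset V → ℝ} (hμs : IsSupp G μ) (hμ1 : ∑ I ∈ indepSets G, μ I = 1) :
    ∑ J ∈ indepSets G, |(stepDist G lam)^[s] μ J - piR G lam J|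
      ≤ (1 - δ) * ∑ J ∈ indepSets G, |μ J - piR G lam J| := by
  have hsum0 : ∑ I ∈ indepSets G, (μ I - piR G lam I) = 0 := by
    rw [Finset.sum_sub_distrib, hμ1, sum_piR hlam, sub_self]
  have hker : ∀ I ∈ indepSets G, ∀ J ∈ indepSets G,
      0 ≤ distAfter G lam I s J - δ * piR G lam J := by
    intro I hIs J hJs
    linarith [hmin I hIs J hJs]
  have hdiff : ∀ J ∈ indepSets G, (stepDist G lam)^[s] μ J - piR G lam J
      = ∑ I ∈ indepSets G, (μ I - piR G lam I) * (distAfter G lam I s J - δ * piR G lam J) := by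
    intro J hJs
    have h1 : (stepDist G lam)^[s] μ J = ∑ I ∈ indepSets G, μ I * distAfter G lam I s J :=
      iterate_stepDist_eq s μ hμs J
    have h2 : piR G lam J = ∑ I ∈ indepSets G, piR G lam I * distAfter G lam I s J := by
      conv_lhs => rw [← iterate_stepDist_piR (G := G) hlam s]
      exact iterate_stepDist_eq s _ isSupp_piR J
    have h3 : ∑ I ∈ indepSets G, (μ I - piR G lam I) * (δ * piR G lam J) = 0 := by
      rw [← Finset.sum_mul, hsum0, zero_mul]
    calc (stepDist G lam)^[s] μ J - piR G lam J
        = ∑ I ∈ indepSets G, (μ I - piR G lam I) * distAfter G lam I s J := by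
          rw [h1, h2, ← Finset.sum_sub_distrib]
          apply Finset.sum_congr rfl
          intro I _
          ring
    _ = _ := by
          rw [← sub_zero (∑ I ∈ indepSets G, (μ I - piR G lam I) * distAfter G lam I s J),
            ← h3, ← Finset.sum_sub_distrib]
          apply Finset.sum_congr rfl
          intro I _
          ring
  calc ∑ J ∈ indepSets G, |(stepDist G lam)^[s] μ J - piR G lam J|
      ≤ ∑ J ∈ indepSets G, ∑ I ∈ indepSets G,
          |μ I - piR G lam I| * (distAfter G lam I s J - δ * piR G lam J) := by
        apply Finset.sum_le_sum
        intro J hJs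
        rw [hdiff J hJs]
        calc |∑ I ∈ indepSets G, (μ I - piR G lam I) * (distAfter G lam I s J - δ * piR G lam J)|
            ≤ ∑ I ∈ indepSets G, |(μ I - piR G lam I) * (distAfter G lam I s J - δ * piR G lam J)| :=
              Finset.abs_sum_le_sum_abs _ _
        _ = ∑ I ∈ indepSets G, |μ I - piR G lam I| * (distAfter G lam I s J - δ * piR G lam J) := by
              apply Finset.sum_congr rfl
              intro I hIs
              rw [abs_mul, abs_of_nonneg (hker I hIs J hJs)]
  _ = ∑ I ∈ indepSets G, |μ I - piR G lam I| *
        (∑ J ∈ indepSets G, (distAfter G lam I s J - δ * piR G lam J)) := by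
        rw [Finset.sum_comm]
        apply Finset.sum_congr rfl
        intro I _
        rw [Finset.mul_sum]
  _ = ∑ I ∈ indepSets G, |μ I - piR G lam I| * (1 - δ) := by
        apply Finset.sum_congr rfl
        intro I hIs
        congr 1
        rw [Finset.sum_sub_distrib, sum_distAfter hlam.le (mem_indepSets_iff.mp hIs) s,
          ← Finset.mul_sum, sum_piR hlam, mul_one]
  _ = (1 - δ) * ∑ J ∈ indepSets G, |μ J - piR G lam J| := by
        rw [← Finset.sum_mul, mul_comm]

lemma mixSet_nonempty [Nonempty V] (hlam : 0 < lam) :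
    ∃ T : ℕ, ∀ I ∈ indepSets G,
      tvDist G (distAfter G lam I T) (hardCore G lam) ≤ 1 / 4 := by
  classical
  set s : ℕ := 2 * Fintype.card V with hs
  have hpairs : ((indepSets G) ×ˢ (indepSets G)).Nonempty :=
    ⟨(∅, ∅), Finset.mem_product.mpr ⟨empty_mem_indepSets, empty_mem_indepSets⟩⟩
  set δ : ℝ := ((indepSets G) ×ˢ (indepSets G)).inf' hpairs
      (fun p => distAfter G lam p.1 s p.2) with hδdef
  have hδpos : 0 < δ := by
    rw [hδdef, Finset.lt_inf'_iff]
    rintro ⟨I, J⟩ hp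
    rw [Finset.mem_product] at hp
    refine distAfter_pos_of_le hlam (mem_indepSets_iff.mp hp.1) (mem_indepSets_iff.mp hp.2) ?_
    show I.card + J.card ≤ s
    have h1 : I.card ≤ Fintype.card V := Finset.card_le_univ I
    have h2 : J.card ≤ Fintype.card V := Finset.card_le_univ J
    omega
  have hδ1 : δ ≤ 1 := by
    have hmem : ((∅, ∅) : Finset V × Finset V) ∈ (indepSets G) ×ˢ (indepSets G) :=
      Finset.mem_product.mpr ⟨empty_mem_indepSets, empty_mem_indepSets⟩
    have h1 : δ ≤ distAfter G lam ∅ s ∅ := Finset.inf'_le _ hmem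
    have h2 : distAfter G lam ∅ s ∅ ≤ 1 := by
      have := sum_distAfter (G := G) hlam.le (I := (∅ : Finset V))
        (by intro u hu; simp at hu) s
      calc distAfter G lam ∅ s ∅
          ≤ ∑ J ∈ indepSets G, distAfter G lam ∅ s J :=
            Finset.single_le_sum (fun J _ => distAfter_nonneg hlam.le ∅ s J)
              empty_mem_indepSets
      _ = 1 := this
    linarith
  have hmin : ∀ I ∈ indepSets G, ∀ J ∈ indepSets G,
      δ * piR G lam J ≤ distAfter G lam I s J := by
    intro I hIs J hJs
    calc δ * piR G lam J ≤ δ * 1 := by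
          exact mul_le_mul_of_nonneg_left (piR_le_one hlam J) hδpos.le
    _ = δ := mul_one δ
    _ ≤ distAfter G lam I s J := by
          have hmem : ((I, J) : Finset V × Finset V) ∈ (indepSets G) ×ˢ (indepSets G) :=
            Finset.mem_product.mpr ⟨hIs, hJs⟩
          exact Finset.inf'_le _ hmem
  -- geometric decay
  have key : ∀ (k : ℕ) (I : Finset V), IsIndep G I →
      ∑ J ∈ indepSets G, |distAfter G lam I (k * s) J - piR G lam J|
        ≤ (1 - δ) ^ k * 2 := by
    intro k
    induction k with
    | zero =>
      intro I hI
      simp only [Nat.zero_mul, pow_zero, one_mul]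
      calc ∑ J ∈ indepSets G, |distAfter G lam I 0 J - piR G lam J|
          ≤ ∑ J ∈ indepSets G, (distAfter G lam I 0 J + piR G lam J) := by
            apply Finset.sum_le_sum
            intro J _
            calc |distAfter G lam I 0 J - piR G lam J|
                ≤ |distAfter G lam I 0 J| + |piR G lam J| := abs_sub _ _
            _ = distAfter G lam I 0 J + piR G lam J := by
                rw [abs_of_nonneg (distAfter_nonneg hlam.le I 0 J),
                  abs_of_nonneg (piR_nonneg hlam J)]
      _ = 2 := by
            rw [Finset.sum_add_distrib, sum_distAfter hlam.le hI 0, sum_piR hlam]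
            norm_num
    | succ n ih =>
      intro I hI
      have hstep : distAfter G lam I ((n + 1) * s) = (stepDist G lam)^[s] (distAfter G lam I (n * s)) := by
        unfold distAfter
        rw [show (n + 1) * s = s + n * s by ring, Function.iterate_add_apply]
      rw [hstep]
      calc ∑ J ∈ indepSets G, |(stepDist G lam)^[s] (distAfter G lam I (n * s)) J - piR G lam J|
          ≤ (1 - δ) * ∑ J ∈ indepSets G, |distAfter G lam I (n * s) J - piR G lam J| :=
            contraction hlam hδpos.le hmin (isSupp_distAfter hI (n * s))
              (sum_distAfter hlam.le hI (n * s))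
      _ ≤ (1 - δ) * ((1 - δ) ^ n * 2) := by
            apply mul_le_mul_of_nonneg_left (ih I hI)
            linarith
      _ = (1 - δ) ^ (n + 1) * 2 := by ring
  obtain ⟨k, hk⟩ : ∃ k : ℕ, (1 - δ) ^ k < 1 / 4 := by
    apply exists_pow_lt_of_lt_one (by norm_num)
    linarith
  refine ⟨k * s, ?_⟩
  intro I hIs
  unfold tvDist
  have heq : ∑ J ∈ indepSets G, |distAfter G lam I (k * s) J - hardCore G lam J|
      = ∑ J ∈ indepSets G, |distAfter G lam I (k * s) J - piR G lam J| := by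
    apply Finset.sum_congr rfl
    intro J hJs
    unfold hardCore piR
    rw [if_pos (mem_indepSets_iff.mp hJs)]
  rw [heq]
  have := key k I (mem_indepSets_iff.mp hIs)
  nlinarith [this, hk]

end GenericLemmas

section Ktt

open Finset

variable {t : ℕ}

/-- The left side of `K_{t,t}`. -/
def Ltt (t : ℕ) : Finset (Fin t ⊕ Fin t) := Finset.univ.image Sum.inl

/-- The right side of `K_{t,t}`. -/
def Rtt (t : ℕ) : Finset (Fin t ⊕ Fin t) := Finset.univ.image Sum.inr

lemma mem_Ltt {x : Fin t ⊕ Fin t} : x ∈ Ltt t ↔ x.isLeft := by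
  cases x <;> simp [Ltt]

lemma mem_Rtt {x : Fin t ⊕ Fin t} : x ∈ Rtt t ↔ x.isRight := by
  cases x <;> simp [Rtt]

lemma card_Ltt : (Ltt t).card = t := by
  rw [Ltt, Finset.card_image_of_injective _ Sum.inl_injective, Finset.card_univ,
    Fintype.card_fin]

lemma card_Rtt : (Rtt t).card = t := by
  rw [Rtt, Finset.card_image_of_injective _ Sum.inr_injective, Finset.card_univ,
    Fintype.card_fin]

lemma Ktt_adj {x y : Fin t ⊕ Fin t} :
    (completeBipartiteGraph (Fin t) (Fin t)).Adj x y ↔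
      (x.isLeft ∧ y.isRight) ∨ (x.isRight ∧ y.isLeft) := by
  simp [completeBipartiteGraph]

lemma Ktt_indep_iff {I : Finset (Fin t ⊕ Fin t)} :
    IsIndep (completeBipartiteGraph (Fin t) (Fin t)) I ↔ I ⊆ Ltt t ∨ I ⊆ Rtt t := by
  constructor
  · intro h
    by_contra hcon
    push_neg at hcon
    obtain ⟨hL, hR⟩ := hcon
    rw [Finset.not_subset] at hL hR
    obtain ⟨a, haI, haL⟩ := hL
    obtain ⟨b, hbI, hbR⟩ := hR
    rw [mem_Ltt] at haL
    rw [mem_Rtt] at hbR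
    have ha : a.isRight := by cases a <;> simp_all
    have hb : b.isLeft := by cases b <;> simp_all
    exact h b hbI a haI (Ktt_adj.mpr (Or.inl ⟨hb, ha⟩))
  · rintro (h | h) u hu v hv hadj
    · rw [Ktt_adj] at hadj
      have hul : u.isLeft := mem_Ltt.mp (h hu)
      have hvl : v.isLeft := mem_Ltt.mp (h hv)
      rcases hadj with ⟨_, h2⟩ | ⟨h1, _⟩
      · cases v <;> simp_all
      · cases u <;> simp_all
    · rw [Ktt_adj] at hadj
      have hur : u.isRight := mem_Rtt.mp (h hu)
      have hvr : v.isRight := mem_Rtt.mp (h hv)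
      rcases hadj with ⟨h1, _⟩ | ⟨_, h2⟩
      · cases u <;> simp_all
      · cases v <;> simp_all

lemma Ktt_indepSets :
    indepSets (completeBipartiteGraph (Fin t) (Fin t)) = (Ltt t).powerset ∪ (Rtt t).powerset := by
  ext I
  rw [mem_indepSets_iff, Ktt_indep_iff, Finset.mem_union, Finset.mem_powerset,
    Finset.mem_powerset]

lemma Ltt_inter_Rtt : Ltt t ∩ Rtt t = ∅ := by
  ext x
  cases x <;> simp [mem_Ltt, mem_Rtt, Finset.mem_inter]

lemma powerset_inter_powerset : (Ltt t).powerset ∩ (Rtt t).powerset = {∅} := by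
  ext I
  simp only [Finset.mem_inter, Finset.mem_powerset, Finset.mem_singleton]
  constructor
  · rintro ⟨h1, h2⟩
    have : I ⊆ Ltt t ∩ Rtt t := Finset.subset_inter h1 h2
    rw [Ltt_inter_Rtt, Finset.subset_empty] at this
    exact this
  · rintro rfl
    exact ⟨Finset.empty_subset _, Finset.empty_subset _⟩

lemma sum_pow_powerset (lam : ℝ) (S : Finset (Fin t ⊕ Fin t)) :
    ∑ J ∈ S.powerset, lam ^ J.card = (lam + 1) ^ S.card := by
  have := Finset.prod_add (fun _ : Fin t ⊕ Fin t => lam) (fun _ => (1:ℝ)) S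
  simp only [Finset.prod_const, one_pow, mul_one] at this
  rw [← this]

lemma Ktt_Z (lam : ℝ) :
    Z (completeBipartiteGraph (Fin t) (Fin t)) lam = 2 * (lam + 1) ^ t - 1 := by
  unfold Z
  rw [Ktt_indepSets]
  have key := Finset.sum_union_inter (s₁ := (Ltt t).powerset) (s₂ := (Rtt t).powerset)
    (f := fun J => lam ^ J.card)
  rw [powerset_inter_powerset] at key
  have h1 : ∑ J ∈ ({∅} : Finset (Finset (Fin t ⊕ Fin t))), lam ^ J.card = 1 := by simp
  have h2 : ∑ J ∈ (Ltt t).powerset, lam ^ J.card = (lam + 1) ^ t := by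
    rw [sum_pow_powerset, card_Ltt]
  have h3 : ∑ J ∈ (Rtt t).powerset, lam ^ J.card = (lam + 1) ^ t := by
    rw [sum_pow_powerset, card_Rtt]
  rw [h1, h2, h3] at key
  linarith

/-- Nonempty proper starting block: nonempty subsets of the left side. -/
def Btt (t : ℕ) : Finset (Finset (Fin t ⊕ Fin t)) := (Ltt t).powerset.erase ∅

lemma mem_Btt {I : Finset (Fin t ⊕ Fin t)} : I ∈ Btt t ↔ I ≠ ∅ ∧ I ⊆ Ltt t := by
  rw [Btt, Finset.mem_erase, Finset.mem_powerset]

lemma Btt_subset_indep :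
    Btt t ⊆ indepSets (completeBipartiteGraph (Fin t) (Fin t)) := by
  intro I hI
  rw [mem_indepSets_iff, Ktt_indep_iff]
  exact Or.inl (mem_Btt.mp hI).2

lemma escape1 {lam : ℝ} {I J : Finset (Fin t ⊕ Fin t)} (hI : I ∈ Btt t)
    (hJB : J ∉ Btt t) (hJne : J ≠ ∅) :
    glauberP (completeBipartiteGraph (Fin t) (Fin t)) lam I J = 0 := by
  obtain ⟨hIne, hIL⟩ := mem_Btt.mp hI
  unfold glauberP
  rw [Finset.sum_eq_zero, mul_zero]
  intro v _
  by_cases hv : v ∈ I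
  · rw [if_pos hv]
    have h1 : J ≠ I.erase v := by
      intro h
      apply hJB
      rw [mem_Btt]
      exact ⟨hJne, h ▸ (Finset.erase_subset v I).trans hIL⟩
    have h2 : J ≠ I := by
      intro h; exact hJB (h ▸ hI)
    rw [if_neg h1, if_neg h2]
  · rw [if_neg hv]
    have h2 : J ≠ I := fun h => hJB (h ▸ hI)
    by_cases hins : IsIndep (completeBipartiteGraph (Fin t) (Fin t)) (insert v I)
    · rw [if_pos hins]
      have h3 : J ≠ insert v I := by
        intro h
        apply hJB
        rw [mem_Btt]
        refine ⟨hJne, h ▸ ?_⟩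
        -- insert v I ⊆ Ltt t : v must be a left vertex
        obtain ⟨u, hu⟩ := Finset.nonempty_iff_ne_empty.mpr hIne
        have hul : u.isLeft := mem_Ltt.mp (hIL hu)
        have hvl : v.isLeft := by
          by_contra hvr
          have hvr' : v.isRight := by cases v <;> simp_all
          exact hins u (Finset.mem_insert_of_mem hu) v (Finset.mem_insert_self v I)
            (Ktt_adj.mpr (Or.inl ⟨hul, hvr'⟩))
        intro x hx
        rcases Finset.mem_insert.mp hx with rfl | hxI
        · exact mem_Ltt.mpr hvl
        · exact hIL hxI
      rw [if_neg h3, if_neg h2]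
    · rw [if_neg hins, if_neg h2]

lemma escape2 {lam : ℝ} {I : Finset (Fin t ⊕ Fin t)} (hI : I ∈ Btt t) :
    glauberP (completeBipartiteGraph (Fin t) (Fin t)) lam I ∅
      = if I.card = 1 then
          (1 / (Fintype.card (Fin t ⊕ Fin t) : ℝ)) * (1 / (lam + 1)) else 0 := by
  obtain ⟨hIne, hIL⟩ := mem_Btt.mp hI
  unfold glauberP
  by_cases hc : I.card = 1
  · rw [if_pos hc]
    obtain ⟨v0, rfl⟩ := Finset.card_eq_one.mp hc
    congr 1
    rw [Finset.sum_eq_single v0]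
    · rw [if_pos (Finset.mem_singleton_self v0), Finset.erase_singleton, if_pos rfl]
    · intro v _ hv
      have hvm : v ∉ ({v0} : Finset (Fin t ⊕ Fin t)) := by simp [hv]
      rw [if_neg hvm]
      by_cases hins : IsIndep (completeBipartiteGraph (Fin t) (Fin t)) (insert v {v0})
      · rw [if_pos hins,
          if_neg (fun h => (Finset.insert_ne_empty v {v0}) h.symm),
          if_neg (fun h => (Finset.singleton_ne_empty v0) h.symm)]
      · rw [if_neg hins, if_neg (fun h => (Finset.singleton_ne_empty v0) h.symm)]
    · intro h
      exact absurd (Finset.mem_univ v0) h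
  · rw [if_neg hc, Finset.sum_eq_zero, mul_zero]
    intro v _
    by_cases hv : v ∈ I
    · rw [if_pos hv]
      have h1 : (∅ : Finset (Fin t ⊕ Fin t)) ≠ I.erase v := by
        intro h
        have : I.card - 1 = 0 := by
          rw [← Finset.card_erase_of_mem hv, ← h, Finset.card_empty]
        have : 1 ≤ I.card := Finset.card_pos.mpr ⟨v, hv⟩
        omega
      rw [if_neg h1, if_neg (fun h => hIne h.symm)]
    · rw [if_neg hv]
      by_cases hins : IsIndep (completeBipartiteGraph (Fin t) (Fin t)) (insert v I)
      · rw [if_pos hins,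
          if_neg (fun h => (Finset.insert_ne_empty v I) h.symm),
          if_neg (fun h => hIne h.symm)]
      · rw [if_neg hins, if_neg (fun h => hIne h.symm)]

lemma iterate_stepDist_nonneg {V : Type*} [Fintype V] [DecidableEq V] {G : SimpleGraph V}
    {lam : ℝ} (hlam : 0 ≤ lam) {μ : Finset V → ℝ} (hμ : ∀ J, 0 ≤ μ J) (s : ℕ) (J : Finset V) :
    0 ≤ (stepDist G lam)^[s] μ J := by
  induction s generalizing J with
  | zero => exact hμ J
  | succ n ih =>
    rw [Function.iterate_succ_apply']
    exact stepDist_nonneg hlam (fun K => ih K) J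

lemma Ktt_T_lower (ht : 1 ≤ t) {lam : ℝ} (hlam : 1 ≤ lam) {T : ℕ}
    (hT : ∀ I ∈ indepSets (completeBipartiteGraph (Fin t) (Fin t)),
      tvDist (completeBipartiteGraph (Fin t) (Fin t))
        (distAfter (completeBipartiteGraph (Fin t) (Fin t)) lam I T)
        (hardCore (completeBipartiteGraph (Fin t) (Fin t)) lam) ≤ 1 / 4) :
    (lam + 1) ^ t / 4 ≤ (T : ℝ) := by
  haveI : Nonempty (Fin t) := ⟨⟨0, by omega⟩⟩
  set G := completeBipartiteGraph (Fin t) (Fin t) with hG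
  have hlam0 : (0:ℝ) < lam := by linarith
  have hl1 : (0:ℝ) < lam + 1 := by linarith
  have hpow2 : (2:ℝ) ≤ (lam + 1) ^ t := by
    calc (2:ℝ) ≤ lam + 1 := by linarith
    _ ≤ (lam + 1) ^ t := le_self_pow₀ (by linarith) (by omega)
  set W : ℝ := (lam + 1) ^ t - 1 with hWdef
  have hW : (0:ℝ) < W := by rw [hWdef]; linarith
  have hW1 : (1:ℝ) ≤ W := by rw [hWdef]; linarith
  have hZeq : Z G lam = 2 * (lam + 1) ^ t - 1 := Ktt_Z lam
  have hZpos : 0 < Z G lam := Z_pos hlam0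
  have hn : (Fintype.card (Fin t ⊕ Fin t) : ℝ) = 2 * t := by
    rw [Fintype.card_sum, Fintype.card_fin]
    push_cast
    ring
  have hnpos : (0:ℝ) < (Fintype.card (Fin t ⊕ Fin t) : ℝ) := by
    rw [hn]
    have : (1:ℝ) ≤ (t:ℝ) := by exact_mod_cast ht
    linarith
  -- the sum over B
  have hWsum : ∑ I ∈ Btt t, lam ^ I.card = W := by
    rw [Btt, Finset.sum_erase_eq_sub (Finset.empty_mem_powerset _), sum_pow_powerset,
      card_Ltt, Finset.card_empty, pow_zero, hWdef]
  -- the initial distribution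
  set μB : Finset (Fin t ⊕ Fin t) → ℝ :=
    fun I => if I ∈ Btt t then lam ^ I.card / W else 0 with hμBdef
  have hμBnonneg : ∀ I, 0 ≤ μB I := by
    intro I
    simp only [hμBdef]
    split_ifs <;> positivity
  have hμBsupp : IsSupp G μB := by
    intro J hJ
    simp only [hμBdef]
    rw [if_neg (fun h => hJ (mem_indepSets_iff.mp (Btt_subset_indep h)))]
  have hμBsum : ∑ I ∈ indepSets G, μB I = 1 := by
    have h1 : ∑ I ∈ Btt t, μB I = ∑ I ∈ indepSets G, μB I :=
      Finset.sum_subset Btt_subset_indep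
        (fun x _ hxB => by simp only [hμBdef]; exact if_neg hxB)
    have h2 : ∑ I ∈ Btt t, μB I = 1 := by
      have hcg : ∀ I ∈ Btt t, μB I = lam ^ I.card / W := fun I hI => by
        simp only [hμBdef]; exact if_pos hI
      rw [Finset.sum_congr rfl hcg, ← Finset.sum_div, hWsum, div_self (ne_of_gt hW)]
    rw [← h1, h2]
  -- the evolved distribution
  set ν : ℕ → Finset (Fin t ⊕ Fin t) → ℝ := fun s => (stepDist G lam)^[s] μB with hνdef
  have hνnonneg : ∀ s K, 0 ≤ ν s K := fun s K =>
    iterate_stepDist_nonneg hlam0.le hμBnonneg s K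
  have hνsucc : ∀ s, ν (s + 1) = stepDist G lam (ν s) := by
    intro s
    rw [hνdef]
    simp only [Function.iterate_succ_apply']
  -- domination by the stationary measure restricted to B
  have hdom : ∀ s K, ν s K ≤ lam ^ K.card / W := by
    intro s
    induction s with
    | zero =>
      intro K
      rw [hνdef]
      simp only [Function.iterate_zero, id]
      simp only [hμBdef]
      split_ifs
      · exact le_rfl
      · positivity
    | succ n ih =>
      intro K
      rw [hνsucc n]
      by_cases hK : IsIndep G K
      · unfold stepDist
        calc ∑ I ∈ indepSets G, ν n I * glauberP G lam I K
            ≤ ∑ I ∈ indepSets G, (lam ^ I.card / W) * glauberP G lam I K := by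
              apply Finset.sum_le_sum
              intro I hIs
              exact mul_le_mul_of_nonneg_right (ih I) (glauberP_nonneg hlam0.le I K)
        _ = (1 / W) * ∑ I ∈ indepSets G, lam ^ K.card * glauberP G lam K I := by
              rw [Finset.mul_sum]
              apply Finset.sum_congr rfl
              intro I hIs
              rw [← glauberP_balance hlam0 (mem_indepSets_iff.mp hIs) hK]
              ring
        _ = lam ^ K.card / W := by
              rw [← Finset.mul_sum, sum_glauberP hlam0.le hK]
              ring
      · rw [isSupp_stepDist _ K hK]
        positivity
  -- escape rate
  have hQ : ∑ I ∈ Btt t, lam ^ I.card *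
      (∑ J ∈ indepSets G \ Btt t, glauberP G lam I J) ≤ lam / (2 * (lam + 1)) := by
    have hptwise : ∀ I ∈ Btt t,
        lam ^ I.card * (∑ J ∈ indepSets G \ Btt t, glauberP G lam I J)
          ≤ if I.card = 1 then lam / ((2 * t) * (lam + 1)) else 0 := by
      intro I hI
      have hsingle : ∑ J ∈ indepSets G \ Btt t, glauberP G lam I J = glauberP G lam I ∅ := by
        apply Finset.sum_eq_single_of_mem
        · rw [Finset.mem_sdiff]
          exact ⟨empty_mem_indepSets, fun h => (mem_Btt.mp h).1 rfl⟩
        · intro J hJ hne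
          rw [Finset.mem_sdiff] at hJ
          exact escape1 hI hJ.2 hne
      rw [hsingle, escape2 hI]
      by_cases hc : I.card = 1
      · rw [if_pos hc, if_pos hc, hc, pow_one, hn]
        apply le_of_eq
        rw [div_mul_div_comm, one_mul, mul_one_div]
      · rw [if_neg hc, if_neg hc, mul_zero]
    calc ∑ I ∈ Btt t, lam ^ I.card * (∑ J ∈ indepSets G \ Btt t, glauberP G lam I J)
        ≤ ∑ I ∈ Btt t, (if I.card = 1 then lam / ((2 * t) * (lam + 1)) else 0) :=
          Finset.sum_le_sum hptwise
    _ = ∑ I ∈ (Btt t).filter (fun I => I.card = 1), lam / ((2 * t) * (lam + 1)) := by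
          rw [Finset.sum_filter]
    _ ≤ (t : ℝ) * (lam / ((2 * t) * (lam + 1))) := by
          rw [Finset.sum_const, nsmul_eq_mul]
          apply mul_le_mul_of_nonneg_right
          · have hsub : (Btt t).filter (fun I => I.card = 1) ⊆ Finset.powersetCard 1 (Ltt t) := by
              intro I hI
              rw [Finset.mem_filter] at hI
              rw [Finset.mem_powersetCard]
              exact ⟨(mem_Btt.mp hI.1).2, hI.2⟩
            have := Finset.card_le_card hsub
            rw [Finset.card_powersetCard, card_Ltt, Nat.choose_one_right] at this
            exact_mod_cast this
          · positivity
    _ = lam / (2 * (lam + 1)) := by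
          have htpos : (0:ℝ) < (t:ℝ) := by exact_mod_cast ht
          field_simp
  -- accounting: mass on A := indepSets \ B grows slowly
  set A : Finset (Finset (Fin t ⊕ Fin t)) := indepSets G \ Btt t with hAdef
  set q : ℝ := (lam / (2 * (lam + 1))) / W with hqdef
  have hqpos : 0 < q := by rw [hqdef]; positivity
  have haccount : ∀ s : ℕ, ∑ J ∈ A, ν s J ≤ (s : ℝ) * q := by
    intro s
    induction s with
    | zero =>
      simp only [Nat.cast_zero, zero_mul]
      apply le_of_eq
      apply Finset.sum_eq_zero
      intro J hJ
      rw [hAdef, Finset.mem_sdiff] at hJ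
      rw [hνdef]
      simp only [Function.iterate_zero, id]
      simp only [hμBdef]
      exact if_neg hJ.2
    | succ n ih =>
      have hstep : ∑ J ∈ A, ν (n + 1) J
          = ∑ I ∈ indepSets G, ν n I * (∑ J ∈ A, glauberP G lam I J) := by
        have h1 : ∀ J ∈ A, ν (n + 1) J = ∑ I ∈ indepSets G, ν n I * glauberP G lam I J := by
          intro J _
          rw [hνsucc n]
          rfl
        calc ∑ J ∈ A, ν (n + 1) J
            = ∑ J ∈ A, ∑ I ∈ indepSets G, ν n I * glauberP G lam I J :=
              Finset.sum_congr rfl h1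
        _ = ∑ I ∈ indepSets G, ∑ J ∈ A, ν n I * glauberP G lam I J := Finset.sum_comm
        _ = ∑ I ∈ indepSets G, ν n I * (∑ J ∈ A, glauberP G lam I J) :=
              Finset.sum_congr rfl (fun I _ => (Finset.mul_sum _ _ _).symm)
      rw [hstep, ← Finset.sum_sdiff (Btt_subset_indep (t := t)), ← hAdef]
      have hA_le : ∑ I ∈ A, ν n I * (∑ J ∈ A, glauberP G lam I J) ≤ ∑ J ∈ A, ν n J := by
        apply Finset.sum_le_sum
        intro I hIA
        have hIind : IsIndep G I := by
          rw [hAdef, Finset.mem_sdiff] at hIA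
          exact mem_indepSets_iff.mp hIA.1
        calc ν n I * (∑ J ∈ A, glauberP G lam I J)
            ≤ ν n I * 1 := by
              apply mul_le_mul_of_nonneg_left _ (hνnonneg n I)
              calc ∑ J ∈ A, glauberP G lam I J
                  ≤ ∑ J ∈ indepSets G, glauberP G lam I J := by
                    apply Finset.sum_le_sum_of_subset_of_nonneg (Finset.sdiff_subset)
                    intro J _ _
                    exact glauberP_nonneg hlam0.le I J
              _ = 1 := sum_glauberP hlam0.le hIind
        _ = ν n I := mul_one _
      have hB_le : ∑ I ∈ Btt t, ν n I * (∑ J ∈ A, glauberP G lam I J) ≤ q := by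
        calc ∑ I ∈ Btt t, ν n I * (∑ J ∈ A, glauberP G lam I J)
            ≤ ∑ I ∈ Btt t, (lam ^ I.card / W) * (∑ J ∈ A, glauberP G lam I J) := by
              apply Finset.sum_le_sum
              intro I hIB
              apply mul_le_mul_of_nonneg_right (hdom n I)
              apply Finset.sum_nonneg
              intro J _
              exact glauberP_nonneg hlam0.le I J
        _ = (1 / W) * ∑ I ∈ Btt t, lam ^ I.card * (∑ J ∈ A, glauberP G lam I J) := by
              rw [Finset.mul_sum]
              apply Finset.sum_congr rfl
              intro I _
              ring
        _ ≤ (1 / W) * (lam / (2 * (lam + 1))) := by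
              apply mul_le_mul_of_nonneg_left _ (by positivity)
              exact hQ
        _ = q := by rw [hqdef]; ring
      push_cast
      linarith
  -- total-variation estimate from the mixing hypothesis
  have hhc_sum : ∑ J ∈ indepSets G, hardCore G lam J = 1 := by
    unfold hardCore
    rw [← Finset.sum_div]
    exact div_self (ne_of_gt hZpos)
  set piA : ℝ := ∑ J ∈ A, hardCore G lam J with hpiAdef
  have hpiA_half : 1 / 2 ≤ piA := by
    have hsplit : ∑ J ∈ A, hardCore G lam J + ∑ J ∈ Btt t, hardCore G lam J = 1 := by
      rw [hAdef, Finset.sum_sdiff (Btt_subset_indep (t := t)), hhc_sum]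
    have hBsum : ∑ J ∈ Btt t, hardCore G lam J = W / Z G lam := by
      unfold hardCore
      rw [← Finset.sum_div, hWsum]
    rw [hpiAdef]
    have hWZ : W / Z G lam ≤ 1 / 2 := by
      rw [div_le_div_iff₀ hZpos (by norm_num), hZeq, hWdef]
      nlinarith
    linarith [hsplit, hBsum ▸ hsplit]
  have hperI : ∀ I ∈ indepSets G, piA - 1 / 4 ≤ ∑ J ∈ A, distAfter G lam I T J := by
    intro I hIs
    have hIind : IsIndep G I := mem_indepSets_iff.mp hIs
    have htv := hT I hIs
    unfold tvDist at htv
    have hd : ∑ J ∈ indepSets G, |distAfter G lam I T J - hardCore G lam J| ≤ 1 / 2 := by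
      linarith
    have h0 : ∑ J ∈ indepSets G, (hardCore G lam J - distAfter G lam I T J) = 0 := by
      rw [Finset.sum_sub_distrib, hhc_sum, sum_distAfter hlam0.le hIind T, sub_self]
    have hsplit0 : ∑ J ∈ A, (hardCore G lam J - distAfter G lam I T J)
        + ∑ J ∈ Btt t, (hardCore G lam J - distAfter G lam I T J) = 0 := by
      rw [hAdef, Finset.sum_sdiff (Btt_subset_indep (t := t)), h0]
    have habs : ∑ J ∈ A, |distAfter G lam I T J - hardCore G lam J|
        + ∑ J ∈ Btt t, |distAfter G lam I T J - hardCore G lam J|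
        = ∑ J ∈ indepSets G, |distAfter G lam I T J - hardCore G lam J| := by
      rw [hAdef, Finset.sum_sdiff (Btt_subset_indep (t := t))]
    have e2 : ∑ J ∈ A, (hardCore G lam J - distAfter G lam I T J)
        ≤ ∑ J ∈ A, |distAfter G lam I T J - hardCore G lam J| := by
      apply Finset.sum_le_sum
      intro J _
      rw [abs_sub_comm]
      exact le_abs_self _
    have e3 : -∑ J ∈ Btt t, (hardCore G lam J - distAfter G lam I T J)
        ≤ ∑ J ∈ Btt t, |distAfter G lam I T J - hardCore G lam J| := by
      rw [← Finset.sum_neg_distrib]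
      apply Finset.sum_le_sum
      intro J _
      rw [abs_sub_comm]
      exact neg_le_abs _
    have hfinal : ∑ J ∈ A, (hardCore G lam J - distAfter G lam I T J) ≤ 1 / 4 := by
      linarith
    have : piA - ∑ J ∈ A, distAfter G lam I T J ≤ 1 / 4 := by
      rw [hpiAdef, ← Finset.sum_sub_distrib]
      exact hfinal
    linarith
  -- averaging over the initial distribution
  have hAT : piA - 1 / 4 ≤ ∑ J ∈ A, ν T J := by
    have hexp : ∀ J, ν T J = ∑ I ∈ indepSets G, μB I * distAfter G lam I T J := by
      intro J
      rw [hνdef]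
      exact iterate_stepDist_eq T μB hμBsupp J
    calc piA - 1 / 4 = (∑ I ∈ indepSets G, μB I) * (piA - 1 / 4) := by
          rw [hμBsum, one_mul]
    _ = ∑ I ∈ indepSets G, μB I * (piA - 1 / 4) := by rw [Finset.sum_mul]
    _ ≤ ∑ I ∈ indepSets G, μB I * (∑ J ∈ A, distAfter G lam I T J) := by
          apply Finset.sum_le_sum
          intro I hIs
          exact mul_le_mul_of_nonneg_left (hperI I hIs) (hμBnonneg I)
    _ = ∑ I ∈ indepSets G, ∑ J ∈ A, μB I * distAfter G lam I T J :=
          Finset.sum_congr rfl (fun I _ => Finset.mul_sum _ _ _)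
    _ = ∑ J ∈ A, ∑ I ∈ indepSets G, μB I * distAfter G lam I T J := Finset.sum_comm
    _ = ∑ J ∈ A, ν T J := Finset.sum_congr rfl (fun J _ => (hexp J).symm)
  -- combine
  have h14 : (1:ℝ) / 4 ≤ (T : ℝ) * q := by
    have hacc := haccount T
    linarith
  have hD : (0:ℝ) < 2 * (lam + 1) * W := by positivity
  have h14' : (1 / 4 : ℝ) * (2 * (lam + 1) * W) ≤ (T : ℝ) * lam := by
    rw [hqdef, div_div, mul_div_assoc'] at h14
    rw [← le_div_iff₀ hD]
    calc (1/4 : ℝ) ≤ (T : ℝ) * lam / (2 * (lam + 1) * W) := h14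
    _ = _ := by rfl
  have hWt : (lam + 1) ^ t = W + 1 := by rw [hWdef]; ring
  rw [hWt]
  nlinarith [h14', hlam0, hW1, mul_pos hlam0 hW, mul_nonneg (sub_nonneg.mpr hW1) hlam0.le]

lemma Ktt_pathwidth (ht : 1 ≤ t) :
    pathwidth (completeBipartiteGraph (Fin t) (Fin t)) = t := by
  haveI : Nonempty (Fin t) := ⟨⟨0, by omega⟩⟩
  set G := completeBipartiteGraph (Fin t) (Fin t) with hG
  have hmem : t ∈ {w : ℕ | ∃ (p : ℕ) (X : Fin p → Finset (Fin t ⊕ Fin t)),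
      IsPathDecomp G p X ∧ ∀ i, (X i).card ≤ w + 1} := by
    refine ⟨t, fun i => Ltt t ∪ {Sum.inr i}, ⟨?_, ?_, ?_⟩, ?_⟩
    · intro v
      cases v with
      | inl a => exact ⟨⟨0, by omega⟩, Finset.mem_union_left _ (mem_Ltt.mpr rfl)⟩
      | inr b => exact ⟨b, Finset.mem_union_right _ (Finset.mem_singleton_self _)⟩
    · intro u v huv
      rw [hG, Ktt_adj] at huv
      rcases huv with ⟨hu, hv⟩ | ⟨hu, hv⟩
      · obtain ⟨b, rfl⟩ := Sum.isRight_iff.mp hv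
        exact ⟨b, Finset.mem_union_left _ (mem_Ltt.mpr hu),
          Finset.mem_union_right _ (Finset.mem_singleton_self _)⟩
      · obtain ⟨b, rfl⟩ := Sum.isRight_iff.mp hu
        exact ⟨b, Finset.mem_union_right _ (Finset.mem_singleton_self _),
          Finset.mem_union_left _ (mem_Ltt.mpr hv)⟩
    · intro v i j k hij hjk hvi hvk
      cases v with
      | inl a => exact Finset.mem_union_left _ (mem_Ltt.mpr rfl)
      | inr b =>
        have key : ∀ m : Fin t, Sum.inr b ∈ Ltt t ∪ {Sum.inr m} → b = m := by
          intro m hm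
          rcases Finset.mem_union.mp hm with h | h
          · exact absurd (mem_Ltt.mp h) (by simp)
          · exact Sum.inr_injective (Finset.mem_singleton.mp h)
        have h1 : b = i := key i hvi
        have h2 : b = k := key k hvk
        have : i = k := h1 ▸ h2
        have : j = i := le_antisymm (this ▸ hjk) hij
        rw [this, ← h1]
        exact Finset.mem_union_right _ (Finset.mem_singleton_self _)
    · intro i
      have hd : Sum.inr i ∉ Ltt t := by
        rw [mem_Ltt]; simp
      show (Ltt t ∪ {Sum.inr i}).card ≤ t + 1
      rw [Finset.union_comm, ← Finset.insert_eq, Finset.card_insert_of_notMem hd, card_Ltt]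
  have hlower : ∀ w ∈ {w : ℕ | ∃ (p : ℕ) (X : Fin p → Finset (Fin t ⊕ Fin t)),
      IsPathDecomp G p X ∧ ∀ i, (X i).card ≤ w + 1}, t ≤ w := by
    rintro w ⟨p, X, ⟨hcov, hedge, hconv⟩, hbag⟩
    -- intervals of right vertices
    have hSb : ∀ b : Fin t, (Finset.univ.filter (fun i : Fin p => Sum.inr b ∈ X i)).Nonempty := by
      intro b
      obtain ⟨i, hi⟩ := hcov (Sum.inr b)
      exact ⟨i, Finset.mem_filter.mpr ⟨Finset.mem_univ i, hi⟩⟩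
    have hSa : ∀ a : Fin t, (Finset.univ.filter (fun i : Fin p => Sum.inl a ∈ X i)).Nonempty := by
      intro a
      obtain ⟨i, hi⟩ := hcov (Sum.inl a)
      exact ⟨i, Finset.mem_filter.mpr ⟨Finset.mem_univ i, hi⟩⟩
    set maxb : Fin t → Fin p := fun b => (Finset.univ.filter
      (fun i : Fin p => Sum.inr b ∈ X i)).max' (hSb b) with hmaxb
    set minb : Fin t → Fin p := fun b => (Finset.univ.filter
      (fun i : Fin p => Sum.inr b ∈ X i)).min' (hSb b) with hminb
    have hmaxb_mem : ∀ b, Sum.inr b ∈ X (maxb b) := by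
      intro b
      have := Finset.max'_mem _ (hSb b)
      exact (Finset.mem_filter.mp this).2
    have hminb_mem : ∀ b, Sum.inr b ∈ X (minb b) := by
      intro b
      have := Finset.min'_mem _ (hSb b)
      exact (Finset.mem_filter.mp this).2
    obtain ⟨bs, _, hbs⟩ := Finset.exists_min_image Finset.univ maxb ⟨Classical.arbitrary _, Finset.mem_univ _⟩
    obtain ⟨b0, _, hb0⟩ := Finset.exists_max_image Finset.univ minb ⟨Classical.arbitrary _, Finset.mem_univ _⟩
    set P : Fin p := maxb bs with hP
    set Qi : Fin p := minb b0 with hQi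
    -- left intervals
    set maxa : Fin t → Fin p := fun a => (Finset.univ.filter
      (fun i : Fin p => Sum.inl a ∈ X i)).max' (hSa a) with hmaxa
    set mina : Fin t → Fin p := fun a => (Finset.univ.filter
      (fun i : Fin p => Sum.inl a ∈ X i)).min' (hSa a) with hmina
    have hmaxa_mem : ∀ a, Sum.inl a ∈ X (maxa a) := by
      intro a
      have := Finset.max'_mem _ (hSa a)
      exact (Finset.mem_filter.mp this).2
    have hmina_mem : ∀ a, Sum.inl a ∈ X (mina a) := by
      intro a
      have := Finset.min'_mem _ (hSa a)
      exact (Finset.mem_filter.mp this).2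
    have hedgeLR : ∀ (a b : Fin t), ∃ i, Sum.inl a ∈ X i ∧ Sum.inr b ∈ X i := by
      intro a b
      apply hedge
      rw [hG, Ktt_adj]
      exact Or.inl ⟨rfl, rfl⟩
    have hlaP : ∀ a, mina a ≤ P := by
      intro a
      obtain ⟨i, hia, hib⟩ := hedgeLR a bs
      calc mina a ≤ i := Finset.min'_le _ i (Finset.mem_filter.mpr ⟨Finset.mem_univ i, hia⟩)
      _ ≤ P := Finset.le_max' _ i (Finset.mem_filter.mpr ⟨Finset.mem_univ i, hib⟩)
    have hQra : ∀ a, Qi ≤ maxa a := by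
      intro a
      obtain ⟨i, hia, hib⟩ := hedgeLR a b0
      calc Qi ≤ i := Finset.min'_le _ i (Finset.mem_filter.mpr ⟨Finset.mem_univ i, hib⟩)
      _ ≤ maxa a := Finset.le_max' _ i (Finset.mem_filter.mpr ⟨Finset.mem_univ i, hia⟩)
    -- a bag with t + 1 vertices
    have hbig : ∃ r : Fin p, t + 1 ≤ (X r).card := by
      by_cases hPQ : Qi ≤ P
      · -- all right vertices live on [Qi, P]; squeeze in one left vertex
        set a0 : Fin t := Classical.arbitrary _ with ha0
        set r : Fin p := max (mina a0) Qi with hr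
        have hra : r ≤ maxa a0 := max_le
          (Finset.min'_le _ _ (Finset.max'_mem _ _)) (hQra a0)
        have h1 : Sum.inl a0 ∈ X r :=
          hconv _ _ _ _ (le_max_left _ _) hra (hmina_mem a0) (hmaxa_mem a0)
        have hrP : r ≤ P := max_le (hlaP a0) hPQ
        have h2 : ∀ b : Fin t, Sum.inr b ∈ X r := by
          intro b
          apply hconv _ _ _ _ (le_trans (hb0 b (Finset.mem_univ b)) (le_max_right _ _))
            (le_trans hrP (hbs b (Finset.mem_univ b))) (hminb_mem b) (hmaxb_mem b)
        refine ⟨r, ?_⟩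
        have hsub : insert (Sum.inl a0) (Rtt t) ⊆ X r := by
          intro x hx
          rcases Finset.mem_insert.mp hx with rfl | hxR
          · exact h1
          · rw [Rtt, Finset.mem_image] at hxR
            obtain ⟨b, _, rfl⟩ := hxR
            exact h2 b
        calc t + 1 = (insert (Sum.inl a0) (Rtt t)).card := by
              rw [Finset.card_insert_of_notMem (by rw [mem_Rtt]; simp), card_Rtt]
        _ ≤ (X r).card := Finset.card_le_card hsub
      · -- the two right intervals are separated: all left intervals cross P
        push_neg at hPQ
        have h1 : ∀ a : Fin t, Sum.inl a ∈ X P := by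
          intro a
          apply hconv _ _ _ _ (hlaP a) (le_trans hPQ.le (hQra a)) (hmina_mem a) (hmaxa_mem a)
        have h2 : Sum.inr bs ∈ X P := hmaxb_mem bs
        refine ⟨P, ?_⟩
        have hsub : insert (Sum.inr bs) (Ltt t) ⊆ X P := by
          intro x hx
          rcases Finset.mem_insert.mp hx with rfl | hxL
          · exact h2
          · rw [Ltt, Finset.mem_image] at hxL
            obtain ⟨a, _, rfl⟩ := hxL
            exact h1 a
        calc t + 1 = (insert (Sum.inr bs) (Ltt t)).card := by
              rw [Finset.card_insert_of_notMem (by rw [mem_Ltt]; simp), card_Ltt]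
        _ ≤ (X P).card := Finset.card_le_card hsub
    obtain ⟨r, hr⟩ := hbig
    have := hbag r
    omega
  unfold pathwidth
  exact le_antisymm (Nat.sInf_le hmem) (le_csInf ⟨t, hmem⟩ hlower)

end Ktt

lemma exists_good_t (c : ℝ) (hc : 0 < c) :
    ∃ t : ℕ, 1 ≤ t ∧ 4 * (2 * (t:ℝ)) ^ c ≤ 2 ^ t := by
  set m : ℕ := ⌈c⌉₊ with hm
  have hcm : c ≤ (m : ℝ) := Nat.le_ceil c
  have hε : (0:ℝ) < 1 / (4 * 2 ^ m) := by positivity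
  have htend := tendsto_pow_const_div_const_pow_of_one_lt m (show (1:ℝ) < 2 by norm_num)
  have hev : ∀ᶠ n : ℕ in Filter.atTop, (n:ℝ) ^ m / 2 ^ n < 1 / (4 * 2 ^ m) :=
    htend.eventually_lt_const hε
  obtain ⟨N, hN⟩ := Filter.eventually_atTop.mp hev
  refine ⟨max N 1, le_max_right N 1, ?_⟩
  set t : ℕ := max N 1 with htdef
  have ht1 : 1 ≤ t := le_max_right N 1
  have htN : N ≤ t := le_max_left N 1
  have htR : (1:ℝ) ≤ (t:ℝ) := by exact_mod_cast ht1
  have hkey : (t:ℝ) ^ m / 2 ^ t < 1 / (4 * 2 ^ m) := hN t htN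
  have h2t : (0:ℝ) < 2 ^ t := by positivity
  have hmain : 4 * 2 ^ m * (t:ℝ) ^ m ≤ 2 ^ t := by
    rw [div_lt_div_iff₀ h2t (by positivity : (0:ℝ) < 4 * 2 ^ m)] at hkey
    nlinarith
  have hrpow : (2 * (t:ℝ)) ^ c ≤ (2 * (t:ℝ)) ^ (m:ℕ) := by
    have h1 : (1:ℝ) ≤ 2 * (t:ℝ) := by linarith
    calc (2 * (t:ℝ)) ^ c ≤ (2 * (t:ℝ)) ^ (m:ℝ) :=
          Real.rpow_le_rpow_of_exponent_le h1 hcm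
    _ = (2 * (t:ℝ)) ^ (m:ℕ) := Real.rpow_natCast _ m
  calc 4 * (2 * (t:ℝ)) ^ c ≤ 4 * (2 * (t:ℝ)) ^ (m:ℕ) := by
        apply mul_le_mul_of_nonneg_left hrpow (by norm_num)
  _ = 4 * 2 ^ m * (t:ℝ) ^ m := by rw [mul_pow]; ring
  _ ≤ 2 ^ t := hmain

/-- For every constant `c > 0` there exists a graph `G` on `n` vertices —
namely a complete bipartite graph `K_{t,t}` with `t` sufficiently large, which has pathwidth
exactly `t` and `n = 2t` vertices — such that for every `λ ≥ 1`,
`τ_{G,λ} ≥ ((λ+1)/2)^{pw(G)} · n^c`. -/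
theorem statement_6 (c : ℝ) (hc : 0 < c) :
    ∃ t : ℕ, 0 < t ∧
      pathwidth (completeBipartiteGraph (Fin t) (Fin t)) = t ∧
      Fintype.card (Fin t ⊕ Fin t) = 2 * t ∧
      ∀ lam : ℝ, 1 ≤ lam →
        ((lam + 1) / 2) ^ pathwidth (completeBipartiteGraph (Fin t) (Fin t)) *
            (Fintype.card (Fin t ⊕ Fin t) : ℝ) ^ c ≤
          (mixingTime (completeBipartiteGraph (Fin t) (Fin t)) lam : ℝ) := by
  obtain ⟨t, ht1, htc⟩ := exists_good_t c hc
  haveI : Nonempty (Fin t) := ⟨⟨0, by omega⟩⟩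
  have hpw := Ktt_pathwidth (t := t) ht1
  have hcard : Fintype.card (Fin t ⊕ Fin t) = 2 * t := by
    rw [Fintype.card_sum, Fintype.card_fin]
    omega
  refine ⟨t, by omega, hpw, hcard, ?_⟩
  intro lam hlam
  have hlam0 : (0:ℝ) < lam := by linarith
  set G := completeBipartiteGraph (Fin t) (Fin t) with hG
  -- the mixing time is attained
  obtain ⟨T, hT⟩ := mixSet_nonempty (G := G) (lam := lam) hlam0
  have hSne : {s : ℕ | ∀ I ∈ indepSets G,
      tvDist G (distAfter G lam I s) (hardCore G lam) ≤ 1 / 4}.Nonempty := ⟨T, hT⟩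
  have hmem := Nat.sInf_mem hSne
  have hlb : (lam + 1) ^ t / 4 ≤ ((mixingTime G lam : ℕ) : ℝ) := by
    apply Ktt_T_lower ht1 hlam
    exact hmem
  rw [hpw, hcard]
  have h2t : (0:ℝ) < 2 ^ t := by positivity
  have hhalf : (0:ℝ) < ((lam + 1) / 2) ^ t := by positivity
  have hcast : ((2 * t : ℕ) : ℝ) = 2 * (t:ℝ) := by push_cast; ring
  rw [hcast]
  calc ((lam + 1) / 2) ^ t * (2 * (t:ℝ)) ^ c
      ≤ ((lam + 1) / 2) ^ t * (2 ^ t / 4) := by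
        apply mul_le_mul_of_nonneg_left _ hhalf.le
        linarith
  _ = (lam + 1) ^ t / 4 := by
        rw [div_pow]
        field_simp
  _ ≤ _ := hlb
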